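/- Let ρ : (0,1] → ℝ be a nonnegative measurable function such that r ↦ r³ρ(r) is integrable on (0,1) and satisfies the second-moment normalization ∫₀¹ r³ρ(r) dr = 2/π. Then for every δ > 0 and every k ∈ ℤ² \ {0} with 0 < δ|k| ≤ π, the symbol λ_δ(k) is strictly positive and |1/λ_δ(k) − 1/|k|²| ≤ δ²/(16 − π²). -/

import Mathlib

open Real MeasureTheory

/-- Euclidean norm of a nonzero integer vector `k ∈ ℤ²`. -/
noncomputable def knorm2 (k : ℤ × ℤ) : ℝ :=
  Real.sqrt ((k.1 : ℝ) ^ 2 + (k.2 : ℝ) ^ 2)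

/-- The 2D Fourier symbol of the nonlocal diffusion operator:
`λ_δ(k) = (4/δ²) ∫₀^{π/2} ∫₀¹ r ρ(r) (1 − cos(r δ |k| cos θ)) dr dθ`. -/
noncomputable def lambdaDelta2 (ρ : ℝ → ℝ) (δ κ : ℝ) : ℝ :=
  (4 / δ ^ 2) * ∫ θ in (0:ℝ)..(π / 2), ∫ r in (0:ℝ)..1,
    r * ρ r * (1 - Real.cos (r * δ * κ * Real.cos θ))


lemma aux_sin_lower {x : ℝ} (hx : 0 ≤ x) : x - x ^ 3 / 6 ≤ Real.sin x := by
  have key : ∀ y : ℝ, HasDerivAt (fun t => Real.sin t - t + t ^ 3 / 6)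
      (Real.cos y - 1 + y ^ 2 / 2) y := by
    intro y
    have h1 : HasDerivAt (fun t : ℝ => t ^ 3 / 6) (y ^ 2 / 2) y := by
      have h := (hasDerivAt_pow 3 y).div_const 6
      refine h.congr_deriv ?_
      push_cast
      ring
    exact ((Real.hasDerivAt_sin y).sub (hasDerivAt_id y)).add h1
  have hmono : MonotoneOn (fun t => Real.sin t - t + t ^ 3 / 6) (Set.Ici 0) := by
    apply monotoneOn_of_deriv_nonneg (convex_Ici 0)
    · exact ((Real.continuous_sin.sub continuous_id).add (by continuity)).continuousOn
    · intro y _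
      exact (key y).differentiableAt.differentiableWithinAt
    · intro y _
      rw [(key y).deriv]
      nlinarith [Real.one_sub_sq_div_two_le_cos (x := y)]
  have h0 := hmono Set.self_mem_Ici (Set.mem_Ici.mpr hx) hx
  simp only [Real.sin_zero] at h0
  norm_num at h0
  linarith

lemma aux_cos_upper (x : ℝ) : Real.cos x ≤ 1 - x ^ 2 / 2 + x ^ 4 / 24 := by
  have main : ∀ y : ℝ, 0 ≤ y → Real.cos y ≤ 1 - y ^ 2 / 2 + y ^ 4 / 24 := by
    intro y hy
    have key : ∀ z : ℝ, HasDerivAt (fun t => 1 - t ^ 2 / 2 + t ^ 4 / 24 - Real.cos t)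
        (-z + z ^ 3 / 6 + Real.sin z) z := by
      intro z
      have h2 : HasDerivAt (fun t : ℝ => t ^ 2 / 2) z z := by
        have h := (hasDerivAt_pow 2 z).div_const 2
        refine h.congr_deriv ?_
        push_cast
        ring
      have h4 : HasDerivAt (fun t : ℝ => t ^ 4 / 24) (z ^ 3 / 6) z := by
        have h := (hasDerivAt_pow 4 z).div_const 24
        refine h.congr_deriv ?_
        push_cast
        ring
      have := (((hasDerivAt_const z (1:ℝ)).sub h2).add h4).sub (Real.hasDerivAt_cos z)
      refine this.congr_deriv ?_
      ring
    have hmono : MonotoneOn (fun t => 1 - t ^ 2 / 2 + t ^ 4 / 24 - Real.cos t) (Set.Ici 0) := by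
      apply monotoneOn_of_deriv_nonneg (convex_Ici 0)
      · exact (by continuity : Continuous fun t : ℝ => 1 - t ^ 2 / 2 + t ^ 4 / 24 - Real.cos t).continuousOn
      · intro z _
        exact (key z).differentiableAt.differentiableWithinAt
      · intro z hz
        rw [(key z).deriv]
        have hz0 : (0:ℝ) ≤ z := le_of_lt (by simpa using hz)
        have := aux_sin_lower hz0
        linarith
    have h0 := hmono Set.self_mem_Ici (Set.mem_Ici.mpr hy) hy
    simp only [Real.cos_zero] at h0
    norm_num at h0
    linarith
  rcases le_total 0 x with h | h
  · exact main x h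
  · have h' := main (-x) (by linarith)
    have h2 : (-x) ^ 2 = x ^ 2 := by ring
    have h4 : (-x) ^ 4 = x ^ 4 := by ring
    rw [h2, h4, Real.cos_neg] at h'
    exact h'


lemma inner_integrable (ρ : ℝ → ℝ) (hmeas : Measurable ρ)
    (hnonneg : ∀ r ∈ Set.Ioc (0:ℝ) 1, 0 ≤ ρ r)
    (hint : IntervalIntegrable (fun r => r ^ 3 * ρ r) volume 0 1) (c : ℝ) :
    IntervalIntegrable (fun r => r * ρ r * (1 - Real.cos (r * c))) volume 0 1 := by
  rw [intervalIntegrable_iff_integrableOn_Ioc_of_le zero_le_one] at hint ⊢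
  apply (hint.const_mul (c ^ 2 / 2)).mono'
  · exact Measurable.aestronglyMeasurable (by fun_prop)
  · rw [ae_restrict_iff' measurableSet_Ioc]
    refine ae_of_all _ fun r hr => ?_
    have hρ := hnonneg r hr
    have hq : 1 - (r * c) ^ 2 / 2 ≤ Real.cos (r * c) := Real.one_sub_sq_div_two_le_cos
    have hc1 : Real.cos (r * c) ≤ 1 := Real.cos_le_one _
    have h0 : 0 ≤ r * ρ r * (1 - Real.cos (r * c)) :=
      mul_nonneg (mul_nonneg hr.1.le hρ) (by linarith)
    rw [Real.norm_eq_abs, abs_of_nonneg h0]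
    nlinarith [mul_le_mul_of_nonneg_left (show 1 - Real.cos (r * c) ≤ (r * c) ^ 2 / 2 by linarith)
      (mul_nonneg hr.1.le hρ)]

lemma integrable5 (ρ : ℝ → ℝ) (hmeas : Measurable ρ)
    (hnonneg : ∀ r ∈ Set.Ioc (0:ℝ) 1, 0 ≤ ρ r)
    (hint : IntervalIntegrable (fun r => r ^ 3 * ρ r) volume 0 1) :
    IntervalIntegrable (fun r => r ^ 5 * ρ r) volume 0 1 := by
  rw [intervalIntegrable_iff_integrableOn_Ioc_of_le zero_le_one] at hint ⊢
  apply hint.mono'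
  · exact Measurable.aestronglyMeasurable (by fun_prop)
  · rw [ae_restrict_iff' measurableSet_Ioc]
    refine ae_of_all _ fun r hr => ?_
    have hρ := hnonneg r hr
    have h0 : 0 ≤ r ^ 5 * ρ r := mul_nonneg (pow_nonneg hr.1.le 5) hρ
    rw [Real.norm_eq_abs, abs_of_nonneg h0]
    nlinarith [hr.1.le, hr.2, pow_le_pow_of_le_one hr.1.le hr.2 (show (3:ℕ) ≤ 5 by norm_num)]

lemma inner_le (ρ : ℝ → ℝ) (hmeas : Measurable ρ)
    (hnonneg : ∀ r ∈ Set.Ioc (0:ℝ) 1, 0 ≤ ρ r)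
    (hint : IntervalIntegrable (fun r => r ^ 3 * ρ r) volume 0 1)
    (hmoment : (∫ r in (0:ℝ)..1, r ^ 3 * ρ r) = 2 / π) (c : ℝ) :
    (∫ r in (0:ℝ)..1, r * ρ r * (1 - Real.cos (r * c))) ≤ c ^ 2 / π := by
  have hpt : ∀ r ∈ Set.Icc (0:ℝ) 1,
      r * ρ r * (1 - Real.cos (r * c)) ≤ c ^ 2 / 2 * (r ^ 3 * ρ r) := by
    intro r hr
    rcases hr.1.eq_or_lt with h | h
    · simp [← h]
    · have hρ := hnonneg r ⟨h, hr.2⟩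
      have hq : 1 - (r * c) ^ 2 / 2 ≤ Real.cos (r * c) := Real.one_sub_sq_div_two_le_cos
      nlinarith [mul_le_mul_of_nonneg_left (show 1 - Real.cos (r * c) ≤ (r * c) ^ 2 / 2 by linarith)
        (mul_nonneg h.le hρ)]
  have hm := intervalIntegral.integral_mono_on zero_le_one
    (inner_integrable ρ hmeas hnonneg hint c) (hint.const_mul (c ^ 2 / 2)) hpt
  rw [intervalIntegral.integral_const_mul, hmoment] at hm
  have : c ^ 2 / 2 * (2 / π) = c ^ 2 / π := by ring
  linarith

lemma inner_ge (ρ : ℝ → ℝ) (hmeas : Measurable ρ)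
    (hnonneg : ∀ r ∈ Set.Ioc (0:ℝ) 1, 0 ≤ ρ r)
    (hint : IntervalIntegrable (fun r => r ^ 3 * ρ r) volume 0 1)
    (hmoment : (∫ r in (0:ℝ)..1, r ^ 3 * ρ r) = 2 / π) (c : ℝ) :
    c ^ 2 / π - c ^ 4 / (12 * π) ≤ ∫ r in (0:ℝ)..1, r * ρ r * (1 - Real.cos (r * c)) := by
  have hπ : (0:ℝ) < π := Real.pi_pos
  have hint5 := integrable5 ρ hmeas hnonneg hint
  have hM5nonneg : 0 ≤ ∫ r in (0:ℝ)..1, r ^ 5 * ρ r := by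
    apply intervalIntegral.integral_nonneg zero_le_one
    intro r hr
    rcases hr.1.eq_or_lt with h | h
    · simp [← h]
    · exact mul_nonneg (by positivity) (hnonneg r ⟨h, hr.2⟩)
  have hM5le : (∫ r in (0:ℝ)..1, r ^ 5 * ρ r) ≤ 2 / π := by
    rw [← hmoment]
    apply intervalIntegral.integral_mono_on zero_le_one hint5 hint
    intro r hr
    rcases hr.1.eq_or_lt with h | h
    · simp [← h]
    · have hρ := hnonneg r ⟨h, hr.2⟩
      nlinarith [pow_le_pow_of_le_one h.le hr.2 (show (3:ℕ) ≤ 5 by norm_num)]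
  have hpt : ∀ r ∈ Set.Icc (0:ℝ) 1,
      c ^ 2 / 2 * (r ^ 3 * ρ r) - c ^ 4 / 24 * (r ^ 5 * ρ r)
        ≤ r * ρ r * (1 - Real.cos (r * c)) := by
    intro r hr
    rcases hr.1.eq_or_lt with h | h
    · simp [← h]
    · have hρ := hnonneg r ⟨h, hr.2⟩
      have hq : (r * c) ^ 2 / 2 - (r * c) ^ 4 / 24 ≤ 1 - Real.cos (r * c) := by
        nlinarith [aux_cos_upper (r * c)]
      nlinarith [mul_le_mul_of_nonneg_left hq (mul_nonneg h.le hρ)]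
  have hm := intervalIntegral.integral_mono_on zero_le_one
    ((hint.const_mul (c ^ 2 / 2)).sub (hint5.const_mul (c ^ 4 / 24)))
    (inner_integrable ρ hmeas hnonneg hint c) hpt
  rw [intervalIntegral.integral_sub (hint.const_mul _) (hint5.const_mul _),
    intervalIntegral.integral_const_mul, intervalIntegral.integral_const_mul, hmoment] at hm
  have hc4 : (0:ℝ) ≤ c ^ 4 := by positivity
  have h1 : c ^ 4 / 24 * (∫ r in (0:ℝ)..1, r ^ 5 * ρ r) ≤ c ^ 4 / (12 * π) := by
    have h2 := mul_le_mul_of_nonneg_left hM5le (show (0:ℝ) ≤ c ^ 4 / 24 by positivity)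
    have h3 : c ^ 4 / 24 * (2 / π) = c ^ 4 / (12 * π) := by ring
    linarith
  have h4 : c ^ 2 / 2 * (2 / π) = c ^ 2 / π := by ring
  linarith

lemma outer_cont (ρ : ℝ → ℝ) (hmeas : Measurable ρ)
    (hnonneg : ∀ r ∈ Set.Ioc (0:ℝ) 1, 0 ≤ ρ r)
    (hint : IntervalIntegrable (fun r => r ^ 3 * ρ r) volume 0 1) (a : ℝ) :
    Continuous fun θ : ℝ =>
      ∫ r in Set.Ioc (0:ℝ) 1, r * ρ r * (1 - Real.cos (r * (a * Real.cos θ))) := by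
  rw [intervalIntegrable_iff_integrableOn_Ioc_of_le zero_le_one] at hint
  apply continuous_of_dominated (bound := fun r => a ^ 2 / 2 * (r ^ 3 * ρ r))
  · intro θ
    exact Measurable.aestronglyMeasurable (by fun_prop)
  · intro θ
    rw [ae_restrict_iff' measurableSet_Ioc]
    refine ae_of_all _ fun r hr => ?_
    have hρ := hnonneg r hr
    set y := r * (a * Real.cos θ) with hy
    have hq : 1 - y ^ 2 / 2 ≤ Real.cos y := Real.one_sub_sq_div_two_le_cos
    have hc1 : Real.cos y ≤ 1 := Real.cos_le_one _
    have h3 : Real.cos θ ≤ 1 := Real.cos_le_one θ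
    have h4 : -1 ≤ Real.cos θ := Real.neg_one_le_cos θ
    have h0 : 0 ≤ r * ρ r * (1 - Real.cos y) :=
      mul_nonneg (mul_nonneg hr.1.le hρ) (by linarith)
    rw [Real.norm_eq_abs, abs_of_nonneg h0]
    have hc2 : (a * Real.cos θ) ^ 2 ≤ a ^ 2 := by
      nlinarith [mul_nonneg (mul_nonneg (sq_nonneg a) (by linarith : (0:ℝ) ≤ 1 - Real.cos θ))
        (by linarith : (0:ℝ) ≤ 1 + Real.cos θ)]
    have hkey : r * ρ r * (1 - Real.cos y) ≤ r * ρ r * (y ^ 2 / 2) :=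
      mul_le_mul_of_nonneg_left (by linarith) (mul_nonneg hr.1.le hρ)
    have hr3 : 0 ≤ r ^ 3 * ρ r := mul_nonneg (pow_nonneg hr.1.le 3) hρ
    calc r * ρ r * (1 - Real.cos y) ≤ r * ρ r * (y ^ 2 / 2) := hkey
      _ = (a * Real.cos θ) ^ 2 / 2 * (r ^ 3 * ρ r) := by rw [hy]; ring
      _ ≤ a ^ 2 / 2 * (r ^ 3 * ρ r) := by
          apply mul_le_mul_of_nonneg_right _ hr3
          linarith
  · exact hint.const_mul _
  · exact ae_of_all _ fun r => by fun_prop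

set_option maxHeartbeats 1600000 in
theorem lambdaDelta2_small_deltaK_estimate (ρ : ℝ → ℝ) (hmeas : Measurable ρ)
    (hnonneg : ∀ r ∈ Set.Ioc (0:ℝ) 1, 0 ≤ ρ r)
    (hint : IntervalIntegrable (fun r => r ^ 3 * ρ r) volume 0 1)
    (hmoment : (∫ r in (0:ℝ)..1, r ^ 3 * ρ r) = 2 / π)
    (δ : ℝ) (hδ : 0 < δ) (k : ℤ × ℤ) (hk : k ≠ 0)
    (hsmall : 0 < δ * knorm2 k ∧ δ * knorm2 k ≤ π) :
    0 < lambdaDelta2 ρ δ (knorm2 k) ∧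
      |1 / lambdaDelta2 ρ δ (knorm2 k) - 1 / (knorm2 k) ^ 2| ≤ δ ^ 2 / (16 - π ^ 2) := by
  obtain ⟨hs0, hsπ⟩ := hsmall
  set κ := knorm2 k with hκdef
  have hπ : (0:ℝ) < π := Real.pi_pos
  have hκ0 : 0 < κ := by nlinarith
  set a := δ * κ with hadef
  set I : ℝ → ℝ := fun θ =>
    ∫ r in (0:ℝ)..1, r * ρ r * (1 - Real.cos (r * (a * Real.cos θ))) with hIdef
  have hIcont : Continuous I := by
    have he : I = fun θ =>
        ∫ r in Set.Ioc (0:ℝ) 1, r * ρ r * (1 - Real.cos (r * (a * Real.cos θ))) := by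
      funext θ
      exact intervalIntegral.integral_of_le zero_le_one
    rw [he]
    exact outer_cont ρ hmeas hnonneg hint a
  have hIint : IntervalIntegrable I volume 0 (π / 2) := hIcont.intervalIntegrable 0 (π / 2)
  have hUle : ∀ θ ∈ Set.Icc (0:ℝ) (π / 2), I θ ≤ a ^ 2 / π * Real.cos θ ^ 2 := by
    intro θ _
    have h := inner_le ρ hmeas hnonneg hint hmoment (a * Real.cos θ)
    have : (a * Real.cos θ) ^ 2 / π = a ^ 2 / π * Real.cos θ ^ 2 := by ring
    simp only [hIdef]
    linarith
  have hLle : ∀ θ ∈ Set.Icc (0:ℝ) (π / 2),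
      a ^ 2 / π * Real.cos θ ^ 2 - a ^ 4 / (12 * π) * Real.cos θ ^ 4 ≤ I θ := by
    intro θ _
    have h := inner_ge ρ hmeas hnonneg hint hmoment (a * Real.cos θ)
    have : (a * Real.cos θ) ^ 2 / π - (a * Real.cos θ) ^ 4 / (12 * π)
        = a ^ 2 / π * Real.cos θ ^ 2 - a ^ 4 / (12 * π) * Real.cos θ ^ 4 := by ring
    simp only [hIdef]
    linarith
  have hcos2 : (∫ θ in (0:ℝ)..(π / 2), Real.cos θ ^ 2) = π / 4 := by
    rw [integral_cos_sq]
    simp [Real.cos_pi_div_two, Real.sin_pi_div_two]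
    ring
  have hcos4 : (∫ θ in (0:ℝ)..(π / 2), Real.cos θ ^ 4) = 3 * π / 16 := by
    have h := integral_cos_pow (a := 0) (b := π / 2) 2
    norm_num [Real.cos_pi_div_two, Real.sin_pi_div_two, hcos2] at h
    rw [h]
    ring
  set J := ∫ θ in (0:ℝ)..(π / 2), I θ with hJdef
  have hJu : J ≤ a ^ 2 / 4 := by
    have hUc : Continuous fun θ : ℝ => a ^ 2 / π * Real.cos θ ^ 2 := by fun_prop
    have hm := intervalIntegral.integral_mono_on (by positivity) hIint
      (hUc.intervalIntegrable 0 (π / 2)) hUle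
    rw [intervalIntegral.integral_const_mul, hcos2] at hm
    have : a ^ 2 / π * (π / 4) = a ^ 2 / 4 := by field_simp
    linarith
  have hJl : a ^ 2 / 4 - a ^ 4 / 64 ≤ J := by
    have hLc : Continuous fun θ : ℝ =>
        a ^ 2 / π * Real.cos θ ^ 2 - a ^ 4 / (12 * π) * Real.cos θ ^ 4 := by fun_prop
    have hm := intervalIntegral.integral_mono_on (by positivity)
      (hLc.intervalIntegrable 0 (π / 2)) hIint hLle
    have hC2 : Continuous fun θ : ℝ => a ^ 2 / π * Real.cos θ ^ 2 := by fun_prop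
    have hC4 : Continuous fun θ : ℝ => a ^ 4 / (12 * π) * Real.cos θ ^ 4 := by fun_prop
    rw [intervalIntegral.integral_sub (hC2.intervalIntegrable 0 (π / 2))
        (hC4.intervalIntegrable 0 (π / 2)),
      intervalIntegral.integral_const_mul, intervalIntegral.integral_const_mul,
      hcos2, hcos4] at hm
    have h1 : a ^ 2 / π * (π / 4) = a ^ 2 / 4 := by field_simp
    have h2 : a ^ 4 / (12 * π) * (3 * π / 16) = a ^ 4 / 64 := by
      field_simp
      ring
    linarith
  have hval : lambdaDelta2 ρ δ κ = 4 / δ ^ 2 * J := by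
    rw [lambdaDelta2, hJdef]
    congr 1
    apply intervalIntegral.integral_congr
    intro θ _
    apply intervalIntegral.integral_congr
    intro r _
    show r * ρ r * (1 - Real.cos (r * δ * κ * Real.cos θ))
      = r * ρ r * (1 - Real.cos (r * (a * Real.cos θ)))
    rw [hadef, show r * δ * κ * Real.cos θ = r * (δ * κ * Real.cos θ) by ring]
  have hfac : (0:ℝ) < 4 / δ ^ 2 := by positivity
  have hlamu : lambdaDelta2 ρ δ κ ≤ κ ^ 2 := by
    rw [hval]
    have h := mul_le_mul_of_nonneg_left hJu hfac.le
    have : 4 / δ ^ 2 * (a ^ 2 / 4) = κ ^ 2 := by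
      rw [hadef]
      field_simp
    linarith
  have hlaml : κ ^ 2 - δ ^ 2 * κ ^ 4 / 16 ≤ lambdaDelta2 ρ δ κ := by
    rw [hval]
    have h := mul_le_mul_of_nonneg_left hJl hfac.le
    have : 4 / δ ^ 2 * (a ^ 2 / 4 - a ^ 4 / 64) = κ ^ 2 - δ ^ 2 * κ ^ 4 / 16 := by
      rw [hadef]
      field_simp
      ring
    linarith
  have hπ2 : π ^ 2 < 16 := by nlinarith [Real.pi_lt_d2, Real.pi_pos]
  have h16 : (0:ℝ) < 16 - π ^ 2 := by linarith
  have hs2 : δ ^ 2 * κ ^ 2 ≤ π ^ 2 := by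
    have h1 : a ^ 2 ≤ π ^ 2 := pow_le_pow_left₀ hs0.le hsπ 2
    have h2 : δ ^ 2 * κ ^ 2 = a ^ 2 := by rw [hadef]; ring
    linarith
  have hA : κ ^ 2 * (16 - π ^ 2) / 16 ≤ lambdaDelta2 ρ δ κ :=
    le_trans (by nlinarith [mul_le_mul_of_nonneg_right hs2 (sq_nonneg κ)]) hlaml
  have hκ2 : (0:ℝ) < κ ^ 2 := by positivity
  have hlampos : 0 < lambdaDelta2 ρ δ κ :=
    lt_of_lt_of_le (div_pos (mul_pos hκ2 h16) (by norm_num)) hA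
  refine ⟨hlampos, ?_⟩
  have habs : 1 / κ ^ 2 ≤ 1 / lambdaDelta2 ρ δ κ := one_div_le_one_div_of_le hlampos hlamu
  rw [abs_of_nonneg (by linarith)]
  rw [div_sub_div _ _ (ne_of_gt hlampos) (ne_of_gt hκ2),
    div_le_div_iff₀ (by positivity) h16]
  linarith [mul_le_mul_of_nonneg_right
      (show κ ^ 2 - lambdaDelta2 ρ δ κ ≤ δ ^ 2 * κ ^ 4 / 16 by linarith)
      (show (0:ℝ) ≤ 16 - π ^ 2 by linarith),
    mul_le_mul_of_nonneg_left hA (show (0:ℝ) ≤ δ ^ 2 * κ ^ 2 by positivity)]
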